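/- An integer triple (x, y, z) with z ≠ 0 satisfies 2(y − x)(z − x) = yz if and only if it is an integer multiple of a triple of one of the following two types: (Type 1) (b(2b − a), a(2b − a), 2b(b − a)) for some integers a, b with a odd and gcd(a, b) = 1; (Type 2) (b(b − A), 2A(b − A), b(b − 2A)) for some integers A, b with b odd and gcd(2A, b) = 1. -/

import Mathlib

/-- Classification of the integer solutions `(x, y, z)` with `z ≠ 0` of the
homogeneous equation `2(y − x)(z − x) = yz`: they are exactly the integer
multiples of the triples of Type 1, `(b(2b − a), a(2b − a), 2b(b − a))` with `a`
odd and `gcd(a, b) = 1`, and of Type 2, `(b(b − A), 2A(b − A), b(b − 2A))` with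
`b` odd and `gcd(2A, b) = 1`. -/
theorem integer_solutions_two_pi_one
    (x y z : ℤ) (hz : z ≠ 0) :
    2 * (y - x) * (z - x) = y * z ↔
      (∃ k a b : ℤ, Odd a ∧ Int.gcd a b = 1 ∧
        x = k * (b * (2 * b - a)) ∧
        y = k * (a * (2 * b - a)) ∧
        z = k * (2 * b * (b - a))) ∨
      (∃ k A b : ℤ, Odd b ∧ Int.gcd (2 * A) b = 1 ∧
        x = k * (b * (b - A)) ∧
        y = k * (2 * A * (b - A)) ∧
        z = k * (b * (b - 2 * A))) := by
  constructor
  · intro h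
    by_cases hx : x = 0
    · subst hx
      have hy : y = 0 := by
        rcases mul_eq_zero.mp (by linarith : y * z = 0) with h' | h'
        · exact h'
        · exact absurd h' hz
      subst hy
      right
      exact ⟨-z, 1, 1, odd_one, by norm_num, by ring, by ring, by ring⟩
    · -- main case
      set g : ℤ := (Int.gcd x y : ℤ) with hg
      have hgpos : 0 < g := by
        rw [hg]; exact_mod_cast Int.gcd_pos_of_ne_zero_left y hx
      have hg0 : g ≠ 0 := hgpos.ne'
      set b : ℤ := x / g with hbdef
      set a : ℤ := y / g with hadef
      have hxb : g * b = x := by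
        rw [hbdef]; exact Int.mul_ediv_cancel' (Int.gcd_dvd_left x y)
      have hya : g * a = y := by
        rw [hadef]; exact Int.mul_ediv_cancel' (Int.gcd_dvd_right x y)
      have hab : Int.gcd a b = 1 := by
        rw [hadef, hbdef, hg, Int.gcd_comm a b]
        exact Int.gcd_div_gcd_div_gcd (Int.gcd_pos_of_ne_zero_left y hx)
      clear hadef hbdef hg
      clear_value g a b
      have hb0 : b ≠ 0 := by
        intro hb; apply hx; rw [← hxb, hb, mul_zero]
      rw [← hxb, ← hya] at h
      -- key relation
      have hz1 : z * (a - 2 * b) = 2 * g * b * (a - b) :=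
        mul_left_cancel₀ hg0 (by linear_combination h)
      have hd0 : a - 2 * b ≠ 0 := by
        intro hd
        have hab' : a - b = b := by linarith
        have hne : 2 * g * b * (a - b) ≠ 0 := by
          rw [hab']
          exact mul_ne_zero (mul_ne_zero (mul_ne_zero two_ne_zero hg0) hb0) hb0
        exact hne (by rw [← hz1, hd, mul_zero])
      have hcab : IsCoprime a b := Int.isCoprime_iff_gcd_eq_one.mpr hab
      obtain ⟨u, v, huv⟩ := hcab
      have hc1 : IsCoprime (a - 2 * b) b := ⟨u, v + 2 * u, by linear_combination huv⟩
      have hc2 : IsCoprime (a - 2 * b) (a - b) :=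
        ⟨-u - v, 2 * u + v, by linear_combination huv⟩
      have hcd : IsCoprime (a - 2 * b) (b * (a - b)) := hc1.mul_right hc2
      have hdvd : (a - 2 * b) ∣ 2 * g := by
        apply hcd.dvd_of_dvd_mul_right
        exact ⟨z, by linear_combination -hz1⟩
      obtain ⟨c, hc⟩ := hdvd
      rcases Int.even_or_odd a with ha | ha
      · -- a even : Type 2
        obtain ⟨A, hA⟩ := ha
        have hA' : a = 2 * A := by omega
        have hgc : g = (A - b) * c := by
          have h2 : 2 * g = 2 * ((A - b) * c) := by rw [hc, hA']; ring
          linarith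
        have hbodd : Odd b := by
          rcases Int.even_or_odd b with hb | hb
          · exfalso
            have hb2 : (2:ℤ) ∣ b := by obtain ⟨r, hr⟩ := hb; exact ⟨r, by linarith⟩
            have h2 : (2:ℤ) ∣ (Int.gcd a b : ℤ) := Int.dvd_coe_gcd ⟨A, hA'⟩ hb2
            rw [hab] at h2
            norm_num at h2
          · exact hb
        right
        refine ⟨-c, A, b, hbodd, ?_, ?_, ?_, ?_⟩
        · rw [← hA']; exact hab
        · linear_combination -hxb + b * hgc
        · linear_combination -hya + a * hgc + (A - b) * c * hA'
        · have h2 : z * (a - 2 * b) = (-c * (b * (b - 2 * A))) * (a - 2 * b) := by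
            linear_combination hz1 + (2 * b * (a - b)) * hgc - b ^ 2 * c * hA'
          exact mul_right_cancel₀ hd0 h2
      · -- a odd : Type 1
        have h2c : (2:ℤ) ∣ c := by
          rcases (Int.prime_two.dvd_mul.mp ⟨g, hc.symm⟩) with h' | h'
          · exfalso
            obtain ⟨m, hm⟩ := ha
            obtain ⟨n, hn⟩ := h'
            omega
          · exact h'
        obtain ⟨c', hc'⟩ := h2c
        have hgc : g = (a - 2 * b) * c' := by
          have h2 : 2 * g = 2 * ((a - 2 * b) * c') := by rw [hc, hc']; ring
          linarith
        left
        refine ⟨-c', a, b, ha, hab, ?_, ?_, ?_⟩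
        · linear_combination -hxb + b * hgc
        · linear_combination -hya + a * hgc
        · have h2 : z * (a - 2 * b) = (-c' * (2 * b * (b - a))) * (a - 2 * b) := by
            linear_combination hz1 + (2 * b * (a - b)) * hgc
          exact mul_right_cancel₀ hd0 h2
  · rintro (⟨k, a, b, -, -, rfl, rfl, rfl⟩ | ⟨k, A, b, -, -, rfl, rfl, rfl⟩) <;> ring
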